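/- Let Λ be a finite-dimensional selfinjective algebra, Q a finite acyclic quiver, and A = (α_s, …, α_1) a sequence of arrows such that for i > j there is no path from t(α_i) to s(α_j). If for a ΛQ-module M the module Mono_A(M) = Mono_{α_1}(…Mono_{α_s}(M)…) is separated monic, then the epimorphism in the short exact sequence 0 → ⊕_{i=1}^s P_{t(α_i)}(E(M_{s(α_i)})) → Mono_A(M) → M → 0 is a right approximation of M in the category of Gorenstein-projective ΛQ-modules. -/

import Mathlib

open Function LinearMap

/-- A representation of the quiver with vertex set `V` and arrow family `E`
over the ring `Λ`: a `Λ`-module at every vertex and a linear map along every arrow. -/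
structure QRep (Λ : Type) [Ring Λ] {V : Type} (E : V → V → Type) : Type 1 where
  obj : V → Type
  [acg : ∀ i, AddCommGroup (obj i)]
  [mod : ∀ i, Module Λ (obj i)]
  map : ∀ {i j : V}, E i j → (obj i →ₗ[Λ] obj j)

attribute [instance] QRep.acg QRep.mod

namespace QRep

variable {Λ : Type} [Ring Λ] {V : Type} {E : V → V → Type}

/-- Morphisms of representations. -/
@[ext]
structure Hom (X Y : QRep Λ E) where
  app : ∀ i, X.obj i →ₗ[Λ] Y.obj i
  comm : ∀ {i j : V} (a : E i j), (Y.map a).comp (app i) = (app j).comp (X.map a)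

def Hom.id (X : QRep Λ E) : Hom X X :=
  ⟨fun _ => LinearMap.id, fun _ => by ext; rfl⟩

def Hom.comp {X Y Z : QRep Λ E} (g : Hom Y Z) (f : Hom X Y) : Hom X Z :=
  ⟨fun i => (g.app i).comp (f.app i), fun {i j} a => by
    ext x
    have h1 := LinearMap.congr_fun (f.comm a) x
    have h2 := LinearMap.congr_fun (g.comm a) (f.app i x)
    simp only [LinearMap.comp_apply] at h1 h2 ⊢
    rw [h2, h1]⟩

def Hom.sub {X Y : QRep Λ E} (f g : Hom X Y) : Hom X Y :=
  ⟨fun i => f.app i - g.app i, fun {i j} a => by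
    ext x
    have h1 := LinearMap.congr_fun (f.comm a) x
    have h2 := LinearMap.congr_fun (g.comm a) x
    simp only [LinearMap.comp_apply, LinearMap.sub_apply, map_sub] at h1 h2 ⊢
    rw [h1, h2]⟩

/-- Two representations are isomorphic. -/
def Iso (X Y : QRep Λ E) : Prop :=
  ∃ f : Hom X Y, ∀ i, Function.Bijective (f.app i)

/-- The assembled map `⊕_{a : j → i} X_j → X_i` at a vertex `i`. -/
noncomputable def uMap (X : QRep Λ E) (i : V) :
    (DirectSum (Σ j : V, E j i) (fun a => X.obj a.1)) →ₗ[Λ] X.obj i := by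
  classical exact DirectSum.toModule Λ _ _ (fun a => X.map a.2)

/-- A representation is separated monic if at every vertex the assembled map
from the direct sum of the incoming branches is injective. -/
def SeparatedMonic (X : QRep Λ E) : Prop :=
  ∀ i : V, Function.Injective (X.uMap i)

/-- Paths in the quiver given by the arrow family `E`. -/
def Path (E : V → V → Type) (i j : V) : Type := @Quiver.Path V ⟨E⟩ i j

/-- The quiver is acyclic: no nontrivial oriented cycles. -/
def Acyclic (E : V → V → Type) : Prop :=
  ∀ i : V, ∀ p : Path E i i, p = @Quiver.Path.nil V ⟨E⟩ i

/-- The representation `P_n(A) = A ⊗ P(n)`: at vertex `i` a copy of `A` for every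
path from `n` to `i`. -/
noncomputable def Pn (Λ : Type) [Ring Λ] (E : V → V → Type) (n : V) (A : Type)
    [AddCommGroup A] [Module Λ A] : QRep Λ E where
  obj i := Path E n i →₀ A
  map {i j} a := Finsupp.lmapDomain A Λ (fun p => @Quiver.Path.cons V ⟨E⟩ n i j p a)

/-- Projectivity of a representation, via the lifting property against
componentwise surjections of representations. -/
def Projective (P : QRep Λ E) : Prop :=
  ∀ (X Y : QRep Λ E) (g : Hom X Y), (∀ i, Function.Surjective (g.app i)) →
    ∀ f : Hom P Y, ∃ f' : Hom P X, g.comp f' = f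

/-- A module has no nonzero projective direct summand. -/
def NoProjSummand (Λ : Type) [Ring Λ] (M : Type) [AddCommGroup M] [Module Λ M] : Prop :=
  ∀ (P C : Type) [AddCommGroup P] [Module Λ P] [AddCommGroup C] [Module Λ C],
    Module.Projective Λ P → Nonempty (M ≃ₗ[Λ] P × C) → Subsingleton P

/-- A module has no nonzero injective direct summand. -/
def NoInjSummand (Λ : Type) [Ring Λ] (M : Type) [AddCommGroup M] [Module Λ M] : Prop :=
  ∀ (P C : Type) [AddCommGroup P] [Module Λ P] [AddCommGroup C] [Module Λ C],
    Module.Injective Λ P → Nonempty (M ≃ₗ[Λ] P × C) → Subsingleton P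

/-- A linear map factors through an injective module. -/
def FactorsThroughInjective (Λ : Type) [Ring Λ] {A B : Type}
    [AddCommGroup A] [Module Λ A] [AddCommGroup B] [Module Λ B] (f : A →ₗ[Λ] B) : Prop :=
  ∃ (J : Type) (_ : AddCommGroup J) (_ : Module Λ J), Module.Injective Λ J ∧
    ∃ (g : A →ₗ[Λ] J) (h : J →ₗ[Λ] B), f = h.comp g

/-- A morphism of representations factors through a projective representation. -/
def FactorsThroughProjective {X Y : QRep Λ E} (f : Hom X Y) : Prop :=
  ∃ (P : QRep Λ E), Projective P ∧ SeparatedMonic P ∧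
    ∃ (u : Hom X P) (v : Hom P Y), f = v.comp u

/-- Stable isomorphism: isomorphism in the stable category of Gorenstein-projective
representations modulo projectives. -/
def StIso (X Y : QRep Λ E) : Prop :=
  ∃ (f : Hom X Y) (g : Hom Y X),
    FactorsThroughProjective ((g.comp f).sub (Hom.id X)) ∧
    FactorsThroughProjective ((f.comp g).sub (Hom.id Y))

/-- `e : M →ₗ J` is an injective envelope: `J` is injective, `e` is injective and
its image is essential in `J`. -/
def IsInjEnvelope {M J : Type} [AddCommGroup M] [Module Λ M] [AddCommGroup J]
    [Module Λ J] (e : M →ₗ[Λ] J) : Prop :=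
  Module.Injective Λ J ∧ Function.Injective e ∧
    ∀ W : Submodule Λ J, Disjoint W (LinearMap.range e) → W = ⊥

end QRep
section MonoACons

variable {Λ : Type} [Ring Λ] {V : Type} {E : V → V → Type}

open QRep

namespace QRep

open Classical in
/-- The map `E_β` in the `Mono_α` construction: it is `single nil ∘ e` when `β = α`
and zero otherwise. -/
noncomputable def EMap (M : QRep Λ E) {v w : V} (α : E v w) {J : Type} [AddCommGroup J]
    [Module Λ J] (e : M.obj v →ₗ[Λ] J) {i j : V} (β : E i j) :
    M.obj i →ₗ[Λ] (Path E w j →₀ J) :=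
  if h : (⟨i, ⟨j, β⟩⟩ : Σ a : V, Σ b : V, E a b) = ⟨v, ⟨w, α⟩⟩ then by
    obtain ⟨h1, h2⟩ := Sigma.mk.inj_iff.mp h
    subst h1
    obtain ⟨h3, _⟩ := Sigma.mk.inj_iff.mp (eq_of_heq h2)
    subst h3
    exact (Finsupp.lsingle (R := Λ) (M := J) (@Quiver.Path.nil V ⟨E⟩ _)).comp e
  else 0

/-- The construction `Mono_α(M)`: the middle term of the componentwise split short
exact sequence `0 → P_w(J) → Mono_α(M) → M → 0` twisted by `e` at the arrow `α`. -/
noncomputable def MonoA (M : QRep Λ E) {v w : V} (α : E v w) {J : Type} [AddCommGroup J]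
    [Module Λ J] (e : M.obj v →ₗ[Λ] J) : QRep Λ E where
  obj i := M.obj i × (Path E w i →₀ J)
  map {i j} β := LinearMap.prod
    ((M.map β).comp (LinearMap.fst Λ _ _))
    ((Finsupp.lmapDomain J Λ (fun p => @Quiver.Path.cons V ⟨E⟩ w i j p β)).comp
        (LinearMap.snd Λ _ _)
      + (EMap M α e β).comp (LinearMap.fst Λ _ _))

/-- The canonical projection `Mono_α(M) → M`. -/
noncomputable def MonoAProj (M : QRep Λ E) {v w : V} (α : E v w) {J : Type} [AddCommGroup J]
    [Module Λ J] (e : M.obj v →ₗ[Λ] J) : Hom (MonoA M α e) M :=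
  ⟨fun _ => LinearMap.fst Λ _ _, fun {i j} β => by ext x; rfl⟩

/-- `IsMonoIter L M N π` holds when `N`, together with the projection `π : N → M`,
is obtained from `M` by successively applying the `Mono` construction at the arrows in
the list `L` (the head of `L` applied last), each time using an injective envelope. -/
inductive IsMonoIter : ∀ (L : List (Σ i : V, Σ j : V, E i j)) (M N : QRep Λ E), Hom N M → Prop
  | nil (M : QRep Λ E) : IsMonoIter [] M M (Hom.id M)
  | cons {L : List (Σ i : V, Σ j : V, E i j)} {M N : QRep Λ E} {π : Hom N M} {v w : V}
      (α : E v w) {J : Type} [AddCommGroup J] [Module Λ J] (e : N.obj v →ₗ[Λ] J)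
      (henv : IsInjEnvelope e) (h : IsMonoIter L M N π) :
      IsMonoIter (⟨v, ⟨w, α⟩⟩ :: L) M (MonoA N α e) (π.comp (MonoAProj N α e))

/-- `π : G → M` is a right approximation of `M` in the category of
Gorenstein-projective (= separated monic) representations. -/
def IsRightApprox {G M : QRep Λ E} (π : Hom G M) : Prop :=
  SeparatedMonic G ∧
    ∀ G' : QRep Λ E, SeparatedMonic G' → ∀ f : Hom G' M, ∃ g : Hom G' G, π.comp g = f

/-- `π : A → M` is the minimal right approximation of `M` in Gproj. -/
def IsMimo {M A : QRep Λ E} (π : Hom A M) : Prop :=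
  IsRightApprox π ∧ ∀ φ : Hom A A, π.comp φ = π → ∀ i, Function.Bijective (φ.app i)

end QRep
end MonoACons
namespace QRep

variable {Λ : Type} [Ring Λ] {V : Type} {E : V → V → Type}

/-- The reflected quiver `Q(v)`: every arrow ending at `v` is reversed. An arrow
`i → j` of `Q(v)` is either an arrow `i → j` of `Q` with `j ≠ v`, or the reversal
of an arrow `j → v` of `Q` (in which case `i = v`). -/
def reflE (E : V → V → Type) (v : V) : V → V → Type :=
  fun i j => {a : E i j // j ≠ v} ⊕ (PLift (i = v) × E j v)

/-- The representation `X'(v)` of the reflected quiver: the branch at `v` is replaced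
by `Ω`, the structure maps at the reversed arrows being the components of `kmap`. -/
noncomputable def reflRep (X : QRep Λ E) (v : V) (hsink : ∀ j, IsEmpty (E v j))
    (Ω : Type) [AddCommGroup Ω] [Module Λ Ω]
    (kmap : Ω →ₗ[Λ] DirectSum (Σ j : V, E j v) (fun a => X.obj a.1)) :
    QRep Λ (reflE E v) where
  obj i := (PLift (i = v) → Ω) × (PLift (i ≠ v) → X.obj i)
  map {i j} a :=
    match a with
    | Sum.inl ⟨a, _⟩ => LinearMap.prod 0
        (LinearMap.pi fun _ : PLift (j ≠ v) =>
          (X.map a).comp ((LinearMap.proj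
            (⟨fun h => (hsink j).false (h ▸ a)⟩ : PLift (i ≠ v))).comp
              (LinearMap.snd Λ _ _)))
    | Sum.inr ⟨hiv, a⟩ => LinearMap.prod 0
        (LinearMap.pi fun _ : PLift (j ≠ v) =>
          (((DirectSum.component Λ (Σ j : V, E j v) (fun b => X.obj b.1) ⟨j, a⟩).comp
              kmap).comp ((LinearMap.proj hiv).comp (LinearMap.fst Λ _ _))))

/-- The reflection relation: `Z` is (the result of) the reflection `X(v)` of the
Gorenstein-projective representation `X` at the sink `v`; it is obtained from the
representation `X'(v)` (defined via a projective cover `δ : C → coker u_X` with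
kernel `Ω` and the lifted kernel map `kmap`) by the `Mono` construction at all
reversed arrows. -/
def IsReflectionAt (X : QRep Λ E) (v : V) (hsink : ∀ j, IsEmpty (E v j))
    (Z : QRep Λ (reflE E v)) : Prop :=
  ∃ (Xbar : Type) (_ : AddCommGroup Xbar) (_ : Module Λ Xbar) (πc : X.obj v →ₗ[Λ] Xbar)
    (C : Type) (_ : AddCommGroup C) (_ : Module Λ C) (δ : C →ₗ[Λ] Xbar)
    (kmap : ↥(LinearMap.ker δ) →ₗ[Λ] DirectSum (Σ j : V, E j v) (fun a => X.obj a.1))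
    (t : C →ₗ[Λ] X.obj v),
    Function.Surjective πc ∧ LinearMap.ker πc = LinearMap.range (X.uMap v) ∧
    Module.Projective Λ C ∧ Function.Surjective δ ∧
    (∀ W : Submodule Λ C, W ⊔ LinearMap.ker δ = ⊤ → W = ⊤) ∧
    πc.comp t = δ ∧ (X.uMap v).comp kmap = t.comp (LinearMap.ker δ).subtype ∧
    ∃ (L : List (Σ i : V, Σ j : V, reflE E v i j))
      (π : Hom Z (reflRep X v hsink (↥(LinearMap.ker δ)) kmap)),
      (∀ x ∈ L, x.1 = v) ∧ L.Nodup ∧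
      (∀ (j : V) (a : E j v),
        (⟨v, j, Sum.inr ⟨⟨rfl⟩, a⟩⟩ : Σ i : V, Σ j : V, reflE E v i j) ∈ L) ∧
      IsMonoIter L (reflRep X v hsink (↥(LinearMap.ker δ)) kmap) Z π

/-- Transport of a representation along a family of bijections of arrow types. -/
def transport {E' : V → V → Type} (σ : ∀ i j, E i j ≃ E' i j) (X : QRep Λ E) :
    QRep Λ E' where
  obj := X.obj
  map {i j} a := X.map ((σ i j).symm a)

/-- `A'` is a (representation-level) syzygy of `A` in the Frobenius category of
Gorenstein-projective representations. -/
def IsSyzRep (A' A : QRep Λ E) : Prop :=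
  ∃ (P : QRep Λ E) (ι : Hom A' P) (π : Hom P A), Projective P ∧ SeparatedMonic P ∧
    (∀ i, Function.Injective (ι.app i)) ∧ (∀ i, Function.Surjective (π.app i)) ∧
    (∀ i, LinearMap.range (ι.app i) = LinearMap.ker (π.app i))

/-- `C` is a double syzygy `Ω²(A)`. -/
def IsOmega2 (A C : QRep Λ E) : Prop :=
  ∃ A', IsSyzRep A' A ∧ IsSyzRep C A'

end QRep

open CategoryTheory

/-- The category of Gorenstein-projective (= separated monic) representations. -/
def GP (Λ : Type) [Ring Λ] {V : Type} (E : V → V → Type) : Type 1 :=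
  {X : QRep Λ E // QRep.SeparatedMonic X}

instance (Λ : Type) [Ring Λ] {V : Type} (E : V → V → Type) :
    Category (GP Λ E) where
  Hom X Y := QRep.Hom X.1 Y.1
  id X := QRep.Hom.id X.1
  comp f g := g.comp f
  id_comp f := by apply QRep.Hom.ext; funext i; exact LinearMap.comp_id _
  comp_id f := by apply QRep.Hom.ext; funext i; exact LinearMap.id_comp _
  assoc f g h := by apply QRep.Hom.ext; funext i; rfl

/-- The relation identifying two morphisms whose difference factors through a
projective object. -/
def stRel (Λ : Type) [Ring Λ] {V : Type} (E : V → V → Type) : HomRel (GP Λ E) :=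
  fun {X Y} f g => QRep.FactorsThroughProjective (f.sub g)

/-- The stable category of Gorenstein-projective representations modulo projectives. -/
def StableGP (Λ : Type) [Ring Λ] {V : Type} (E : V → V → Type) : Type 1 :=
  CategoryTheory.Quotient (stRel Λ E)

noncomputable instance (Λ : Type) [Ring Λ] {V : Type} (E : V → V → Type) :
    Category (StableGP Λ E) :=
  inferInstanceAs (Category (CategoryTheory.Quotient (stRel Λ E)))

namespace QRep

section ApproxAux

variable {Λ : Type} [Ring Λ] {V : Type} {E : V → V → Type}


private lemma aux_transGen_path {i j : V}
    (h : Relation.TransGen (fun a b : V => Nonempty (E a b)) i j) :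
    ∃ p : @Quiver.Path V ⟨E⟩ i j, 0 < @Quiver.Path.length V ⟨E⟩ i j p := by
  letI : Quiver V := ⟨E⟩
  induction h with
  | single hab => exact ⟨(Quiver.Path.nil).cons hab.some, by simp⟩
  | tail _ hbc ih => exact ⟨ih.choose.cons hbc.some, by simp⟩

private lemma aux_path_finite [Fintype V] [∀ i j, Fintype (E i j)]
    (hacyc : QRep.Acyclic E) (a b : V) : Finite (@Quiver.Path V ⟨E⟩ a b) := by
  letI : Quiver V := ⟨E⟩
  have hirr : ∀ i : V, ¬ Relation.TransGen (fun a b : V => Nonempty (E a b)) i i := by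
    intro i hi
    obtain ⟨p, hp⟩ := aux_transGen_path (E := E) hi
    rw [hacyc i p] at hp
    simp at hp
  have hwf : WellFounded (Relation.TransGen (fun a b : V => Nonempty (E a b))) := by
    haveI : IsTrans V (Relation.TransGen fun a b : V => Nonempty (E a b)) :=
      ⟨fun _ _ _ => Relation.TransGen.trans⟩
    haveI : IsIrrefl V (Relation.TransGen fun a b : V => Nonempty (E a b)) := ⟨hirr⟩
    exact Finite.wellFounded_of_trans_of_irrefl _
  revert a
  refine hwf.induction (C := fun b => ∀ a, Finite (@Quiver.Path V ⟨E⟩ a b)) b ?_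
  intro b IH a
  haveI : ∀ i : V, Finite (@Quiver.Path V ⟨E⟩ a i × E i b) := by
    intro i
    by_cases h : Nonempty (E i b)
    · haveI := IH i (Relation.TransGen.single h)
      infer_instance
    · haveI : IsEmpty (E i b) := not_nonempty_iff.mp h
      infer_instance
  refine Finite.of_surjective
    (f := fun x : PLift (b = a) ⊕ Σ i : V, (@Quiver.Path V ⟨E⟩ a i × E i b) =>
      match x with
      | Sum.inl h => cast (by rw [h.down]) (Quiver.Path.nil : @Quiver.Path V ⟨E⟩ a a)
      | Sum.inr ⟨_, p, e⟩ => p.cons e) ?_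
  intro p
  cases p with
  | nil => exact ⟨Sum.inl ⟨rfl⟩, rfl⟩
  | cons p e => exact ⟨Sum.inr ⟨_, p, e⟩, rfl⟩

variable {J : Type} [AddCommGroup J] [Module Λ J]

private lemma aux_ext_lemma (G' : QRep Λ E) (hJ : Module.Injective Λ J)
    (hG' : SeparatedMonic G') (j : V)
    (c : ∀ a : Σ k : V, E k j, G'.obj a.1 →ₗ[Λ] J) :
    ∃ ψ : G'.obj j →ₗ[Λ] J, ∀ a : Σ k : V, E k j, ψ.comp (G'.map a.2) = c a := by
  classical
  letI : Quiver V := ⟨E⟩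
  obtain ⟨ψ, hψ⟩ := hJ.out (G'.uMap j) (hG' j)
      (DirectSum.toModule Λ (Σ k : V, E k j) J fun a => c a)
  refine ⟨ψ, fun a => ?_⟩
  ext x
  have h2 := hψ (DirectSum.lof Λ (Σ k : V, E k j) (fun a => G'.obj a.1) a x)
  have h1 : G'.uMap j (DirectSum.lof Λ (Σ k : V, E k j) (fun a => G'.obj a.1) a x)
      = G'.map a.2 x :=
    DirectSum.toModule_lof (ι := Σ k : V, E k j) (φ := fun a => G'.map a.2) Λ a x
  rw [h1, DirectSum.toModule_lof] at h2
  simpa using h2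

open Classical in
private noncomputable def auxDelta (G' : QRep Λ E) {j : V} (a₀ : Σ k : V, E k j)
    (φ : G'.obj a₀.1 →ₗ[Λ] J) (a : Σ k : V, E k j) : G'.obj a.1 →ₗ[Λ] J :=
  if h : a = a₀ then by rw [h]; exact φ else 0

private lemma auxDelta_self (G' : QRep Λ E) {j : V} (a₀ : Σ k : V, E k j)
    (φ : G'.obj a₀.1 →ₗ[Λ] J) : auxDelta G' a₀ φ a₀ = φ := by
  simp [auxDelta]

private lemma auxDelta_ne (G' : QRep Λ E) {j : V} {a₀ a : Σ k : V, E k j}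
    (φ : G'.obj a₀.1 →ₗ[Λ] J) (h : a ≠ a₀) : auxDelta G' a₀ φ a = 0 := by
  simp [auxDelta, h]

private noncomputable def auxH (G' : QRep Λ E) (hJ : Module.Injective Λ J)
    (hG' : SeparatedMonic G') {v w : V} (α : E v w) (φ₀ : G'.obj v →ₗ[Λ] J) :
    ∀ {i : V} (_ : @Quiver.Path V ⟨E⟩ w i), (G'.obj i →ₗ[Λ] J) := fun {i} p =>
  @Quiver.Path.rec V ⟨E⟩ w (fun i _ => G'.obj i →ₗ[Λ] J)
    (Classical.choose (aux_ext_lemma G' hJ hG' w (auxDelta G' ⟨v, α⟩ φ₀)))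
    (fun {i j} p β ih =>
      Classical.choose (aux_ext_lemma G' hJ hG' j (auxDelta G' ⟨i, β⟩ ih)))
    i p

private lemma auxH_nil (G' : QRep Λ E) (hJ : Module.Injective Λ J)
    (hG' : SeparatedMonic G') {v w : V} (α : E v w) (φ₀ : G'.obj v →ₗ[Λ] J)
    (a : Σ k : V, E k w) :
    (auxH G' hJ hG' α φ₀ (@Quiver.Path.nil V ⟨E⟩ w)).comp (G'.map a.2)
      = auxDelta G' ⟨v, α⟩ φ₀ a :=
  Classical.choose_spec (aux_ext_lemma G' hJ hG' w (auxDelta G' ⟨v, α⟩ φ₀)) a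

private lemma auxH_cons (G' : QRep Λ E) (hJ : Module.Injective Λ J)
    (hG' : SeparatedMonic G') {v w : V} (α : E v w) (φ₀ : G'.obj v →ₗ[Λ] J)
    {i j : V} (p : @Quiver.Path V ⟨E⟩ w i) (β : E i j) (a : Σ k : V, E k j) :
    (auxH G' hJ hG' α φ₀ (@Quiver.Path.cons V ⟨E⟩ w i j p β)).comp (G'.map a.2)
      = auxDelta G' ⟨i, β⟩ (auxH G' hJ hG' α φ₀ p) a :=
  Classical.choose_spec (aux_ext_lemma G' hJ hG' j
    (auxDelta G' ⟨i, β⟩ (auxH G' hJ hG' α φ₀ p))) a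

private lemma aux_triple_of_pair {v w i : V} {β : E i w} {α : E v w}
    (h : (⟨i, ⟨w, β⟩⟩ : Σ a : V, Σ b : V, E a b) = ⟨v, ⟨w, α⟩⟩) :
    (⟨i, β⟩ : Σ k : V, E k w) = ⟨v, α⟩ := by
  obtain ⟨h1, h2⟩ := Sigma.mk.inj_iff.mp h
  subst h1
  obtain ⟨h5, h6⟩ := Sigma.mk.inj_iff.mp (eq_of_heq h2)
  rw [eq_of_heq h6]

private lemma aux_EMap_self (M : QRep Λ E) {v w : V} (α : E v w)
    (e : M.obj v →ₗ[Λ] J) :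
    EMap M α e α
      = (Finsupp.lsingle (R := Λ) (M := J) (@Quiver.Path.nil V ⟨E⟩ w)).comp e := by
  unfold EMap
  rw [dif_pos rfl]
  generalize_proofs pfA pfB pfC
  rw [proof_irrel pfA ⟨rfl, HEq.rfl⟩,
      proof_irrel pfB (fun α_1 h2 => ⟨rfl, (Sigma.mk.inj_iff.mp (eq_of_heq h2)).2⟩)]

private lemma aux_EMap_ne (M : QRep Λ E) {v w : V} (α : E v w)
    (e : M.obj v →ₗ[Λ] J) {i j : V} (β : E i j)
    (h : (⟨i, ⟨j, β⟩⟩ : Σ a : V, Σ b : V, E a b) ≠ ⟨v, ⟨w, α⟩⟩) :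
    EMap M α e β = 0 := by
  unfold EMap
  rw [dif_neg h]

private lemma aux_lift_step (X : QRep Λ E) {v w : V} (α : E v w)
    (hJ : Module.Injective Λ J) (e : X.obj v →ₗ[Λ] J)
    (hfin : ∀ i : V, Finite (@Quiver.Path V ⟨E⟩ w i))
    (G' : QRep Λ E) (hG' : SeparatedMonic G') (f : Hom G' X) :
    ∃ g : Hom G' (MonoA X α e), (MonoAProj X α e).comp g = f := by
  haveI : ∀ i : V, Finite (Path E w i) := hfin
  set φ₀ : G'.obj v →ₗ[Λ] J := e.comp (f.app v) with hφ₀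
  let h : ∀ i : V, G'.obj i →ₗ[Λ] (Path E w i →₀ J) := fun i =>
    ((Finsupp.linearEquivFunOnFinite Λ J (Path E w i)).symm.toLinearMap).comp
      (LinearMap.pi fun q : Path E w i => auxH G' hJ hG' α φ₀ q)
  have happ : ∀ (i : V) (x : G'.obj i) (q : Path E w i),
      h i x q = auxH G' hJ hG' α φ₀ q x := fun i x q => rfl
  refine ⟨⟨fun i => (f.app i).prod (h i), ?_⟩, ?_⟩
  · intro i j β
    ext x
    refine Prod.ext ?_ ?_
    · exact LinearMap.congr_fun (f.comm β) x
    · ext q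
      show Finsupp.mapDomain (α := @Quiver.Path V ⟨E⟩ w i) (β := @Quiver.Path V ⟨E⟩ w j)
            (fun p => @Quiver.Path.cons V ⟨E⟩ w i j p β) (h i x) q
          + EMap X α e β (f.app i x) q = h j (G'.map β x) q
      rw [happ]
      cases q with
      | nil =>
        have hnil : (@Quiver.Path.nil V ⟨E⟩ w) ∉ Set.range
            (fun p' : @Quiver.Path V ⟨E⟩ w i => @Quiver.Path.cons V ⟨E⟩ w i w p' β) := by
          rintro ⟨p', hp'⟩
          letI : Quiver V := ⟨E⟩
          exact Quiver.Path.cons_ne_nil p' β hp'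
        erw [Finsupp.mapDomain_notin_range _ _ hnil]
        have hbase := LinearMap.congr_fun (auxH_nil G' hJ hG' α φ₀ ⟨i, β⟩) x
        simp only [LinearMap.comp_apply] at hbase
        rw [hbase]
        by_cases hc : (⟨i, β⟩ : Σ k : V, E k w) = ⟨v, α⟩
        · obtain ⟨h1, h2⟩ := Sigma.mk.inj_iff.mp hc
          subst h1
          have h3 := eq_of_heq h2
          subst h3
          rw [aux_EMap_self, auxDelta_self, hφ₀]
          exact (zero_add _).trans Finsupp.single_eq_same
        · rw [aux_EMap_ne X α e β (fun hcc => hc (aux_triple_of_pair hcc)),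
            auxDelta_ne G' φ₀ hc]
          simp
          rfl
      | cons p β'' =>
        rename_i i''
        have hstep := LinearMap.congr_fun
          (auxH_cons G' hJ hG' α φ₀ p β'' ⟨i, β⟩) x
        simp only [LinearMap.comp_apply] at hstep
        rw [hstep]
        have hEz : EMap X α e β (f.app i x) (@Quiver.Path.cons V ⟨E⟩ w i'' j p β'') = 0 := by
          by_cases hc : (⟨i, ⟨j, β⟩⟩ : Σ a : V, Σ b : V, E a b) = ⟨v, ⟨w, α⟩⟩
          · obtain ⟨h1, h2⟩ := Sigma.mk.inj_iff.mp hc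
            subst h1
            obtain ⟨h3, h4⟩ := Sigma.mk.inj_iff.mp (eq_of_heq h2)
            subst h3
            have h5 := eq_of_heq h4
            subst h5
            rw [aux_EMap_self]
            refine Finsupp.single_eq_of_ne' ?_
            letI : Quiver V := ⟨E⟩
            exact Quiver.Path.nil_ne_cons p β''
          · rw [aux_EMap_ne X α e β hc]
            rfl
        rw [hEz, add_zero]
        by_cases hc : (⟨i, β⟩ : Σ k : V, E k j) = ⟨i'', β''⟩
        · obtain ⟨h1, h2⟩ := Sigma.mk.inj_iff.mp hc
          subst h1
          have h3 := eq_of_heq h2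
          subst h3
          rw [auxDelta_self]
          have hinj : Function.Injective
              (fun p' : @Quiver.Path V ⟨E⟩ w i => @Quiver.Path.cons V ⟨E⟩ w i j p' β) := by
            intro p1 p2 hp
            letI : Quiver V := ⟨E⟩
            exact eq_of_heq (Quiver.Path.heq_of_cons_eq_cons hp)
          have hmd := Finsupp.mapDomain_apply hinj (h i x) p
          rw [hmd]
          exact happ i x p
        · rw [auxDelta_ne G' _ hc]
          have hnr : (@Quiver.Path.cons V ⟨E⟩ w i'' j p β'') ∉ Set.range
              (fun p' : @Quiver.Path V ⟨E⟩ w i => @Quiver.Path.cons V ⟨E⟩ w i j p' β) := by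
            rintro ⟨p', hp'⟩
            letI : Quiver V := ⟨E⟩
            have h1 := Quiver.Path.obj_eq_of_cons_eq_cons hp'
            subst h1
            have h2 := eq_of_heq (Quiver.Path.hom_heq_of_cons_eq_cons hp')
            exact hc (by rw [h2])
          erw [Finsupp.mapDomain_notin_range _ _ hnr]
          simp
  · apply Hom.ext
    funext i
    ext x
    rfl

private lemma aux_iter_lift {L : List (Σ i : V, Σ j : V, E i j)} {M N : QRep Λ E}
    {π : Hom N M} (hiter : IsMonoIter L M N π)
    (hfin : ∀ w i : V, Finite (@Quiver.Path V ⟨E⟩ w i)) :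
    ∀ G' : QRep Λ E, SeparatedMonic G' → ∀ f : Hom G' M, ∃ g : Hom G' N, π.comp g = f := by
  induction hiter with
  | nil M =>
    intro G' _ f
    refine ⟨f, ?_⟩
    apply Hom.ext
    funext i
    exact LinearMap.id_comp _
  | @cons L M N π v w α J' inst1 inst2 e henv hit IH =>
    intro G' hG' f
    obtain ⟨g', hg'⟩ := IH G' hG' f
    obtain ⟨g, hg⟩ := aux_lift_step N α henv.1 e (hfin w) G' hG' g'
    refine ⟨g, ?_⟩
    have hassoc : (π.comp (MonoAProj N α e)).comp g
        = π.comp ((MonoAProj N α e).comp g) := by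
      apply Hom.ext
      funext i
      rfl
    rw [hassoc, hg, hg']

end ApproxAux

end QRep
/-- If `A = (α_s, …, α_1)` is a sequence of arrows such that for
`i > j` there is no path from `t(α_i)` to `s(α_j)`, and `Mono_A(M)` is separated
monic, then the epimorphism `Mono_A(M) → M` is a right approximation of `M` in the
category of Gorenstein-projective (separated monic) representations. -/
theorem monoIter_is_right_approximation
    (k : Type) [Field k] (Λ : Type) [Ring Λ] [Algebra k Λ] [FiniteDimensional k Λ]
    (hself : Module.Injective Λ Λ)
    {V : Type} [Fintype V] {E : V → V → Type} [∀ i j, Fintype (E i j)]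
    (hacyc : QRep.Acyclic E)
    (L : List (Σ i : V, Σ j : V, E i j))
    (hL : L.Pairwise fun x y => IsEmpty (QRep.Path E y.2.1 x.1))
    (M N : QRep Λ E) (hfin : ∀ i, Module.Finite Λ (M.obj i))
    (π : QRep.Hom N M) (hiter : QRep.IsMonoIter L M N π)
    (hsep : QRep.SeparatedMonic N) :
    QRep.IsRightApprox π := by
  have hfin : ∀ w i : V, Finite (@Quiver.Path V ⟨E⟩ w i) :=
    fun w i => QRep.aux_path_finite hacyc w i
  exact ⟨hsep, fun G' hG' f => QRep.aux_iter_lift hiter hfin G' hG' f⟩
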